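/- Let n ≥ 3 and τ ≤ 1/2. Let w ∈ ℝ^n belong to the class C_τ and let u ∈ ℝ^n satisfy w(i) − u(i) ∈ ℤ for all i. Define v ∈ ℝ^n recursively by v(i) = w(i) for i = 1, 2, 3 and v(i) = u(i) − round(u(i) − 3v(i−1) + 3v(i−2) − v(i−3)) for 4 ≤ i ≤ n. Then v = w. (Correctness of the recovery recursion in the paper's Algorithm 2: applied to the observation u = mod(w,1) with the correct first three values, it reproduces the smooth vector w exactly.) -/

import Mathlib

/-- Correctness of the recovery recursion of the paper's
Algorithm 2.  If `w ∈ C_τ` with `τ ≤ 1/2`, `u` agrees with `w`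
modulo 1, and `v` is defined by `v(i) = w(i)` for `i = 1,2,3` and
`v(i) = u(i) − round(u(i) − 3v(i−1) + 3v(i−2) − v(i−3))` for
`4 ≤ i ≤ n`, then `v = w`. -/
theorem recovery_recursion_correct
    (n : ℕ) (hn : 3 ≤ n)
    (τ : ℝ) (hτ : τ ≤ 1 / 2)
    (w u v : ℕ → ℝ)
    (hw : ∀ i, 4 ≤ i → i ≤ n →
      |w i - 3 * w (i - 1) + 3 * w (i - 2) - w (i - 3)| < τ)
    (hmod : ∀ i, 1 ≤ i → i ≤ n → ∃ k : ℤ, w i - u i = (k : ℝ))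
    (hinit : ∀ i, 1 ≤ i → i ≤ 3 → v i = w i)
    (hrec : ∀ i, 4 ≤ i → i ≤ n →
      v i = u i - round (u i - 3 * v (i - 1) + 3 * v (i - 2) - v (i - 3))) :
    ∀ i, 1 ≤ i → i ≤ n → v i = w i := by
  intro i
  induction i using Nat.strong_induction_on with
  | _ i ih =>
    intro h1 hin
    by_cases h3 : i ≤ 3
    · exact hinit i h1 h3
    · push_neg at h3
      have h4 : 4 ≤ i := h3
      have e1 : v (i - 1) = w (i - 1) := ih (i - 1) (by omega) (by omega) (by omega)
      have e2 : v (i - 2) = w (i - 2) := ih (i - 2) (by omega) (by omega) (by omega)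
      have e3 : v (i - 3) = w (i - 3) := ih (i - 3) (by omega) (by omega) (by omega)
      obtain ⟨k, hk⟩ := hmod i h1 hin
      have hδ := hw i h4 hin
      have hδ2 : |w i - 3 * w (i - 1) + 3 * w (i - 2) - w (i - 3)| < 1 / 2 :=
        lt_of_lt_of_le hδ hτ
      have hx : u i - 3 * v (i - 1) + 3 * v (i - 2) - v (i - 3) =
          (w i - 3 * w (i - 1) + 3 * w (i - 2) - w (i - 3)) - (k : ℝ) := by
        rw [e1, e2, e3]; linarith
      have hr : round (u i - 3 * v (i - 1) + 3 * v (i - 2) - v (i - 3)) = -k := by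
        rw [hx, round_sub_intCast]
        have : round (w i - 3 * w (i - 1) + 3 * w (i - 2) - w (i - 3)) = 0 := by
          rw [round_eq_zero_iff]
          constructor
          · linarith [abs_lt.mp hδ2 |>.1]
          · exact abs_lt.mp hδ2 |>.2
        omega
      rw [hrec i h4 hin, hr]
      push_cast
      linarith
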